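/- Let H₀ and H₁ be complex Hilbert spaces, T₀ ∈ B(H₀), T₁ ∈ B(H₁), A ∈ B(H₁, H₀), and let R be the block operator on H₀ ⊕₂ H₁ defined by R(x, h) = (T₀x + Ah, T₁h). Let μ ∈ ℂ, let k ∈ H₁ satisfy T₁ k = μ k, and let e ∈ H₀ satisfy T₀* e = conj(μ)·e, where T₀* is the Hilbert-space adjoint. Suppose p is a polynomial with complex coefficients such that p(R) = 0 and p′(μ) ≠ 0, where p′ is the derivative of p. Then ⟨e, A k⟩ = 0, where ⟨·,·⟩ denotes the inner product (linear in the second argument). -/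

import Mathlib

noncomputable section

/-- The consequence (4.3) of the computation (4.2): for the block operator
`R(x,h) = (T₀x + Ah, T₁h)`, an eigenvector `k` of `T₁` with eigenvalue `μ`, and a vector `e`
with `T₀* e = conj(μ)·e`, if `p(R) = 0` for a polynomial `p` with `p′(μ) ≠ 0`, then
`⟨e, Ak⟩ = 0`. -/
theorem inner_eq_zero_of_aeval_block_eq_zero
    {H₀ H₁ : Type}
    [NormedAddCommGroup H₀] [InnerProductSpace ℂ H₀] [CompleteSpace H₀]
    [NormedAddCommGroup H₁] [InnerProductSpace ℂ H₁] [CompleteSpace H₁]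
    (T₀ : H₀ →L[ℂ] H₀) (T₁ : H₁ →L[ℂ] H₁) (A : H₁ →L[ℂ] H₀)
    (R : WithLp 2 (H₀ × H₁) →L[ℂ] WithLp 2 (H₀ × H₁))
    (hR : ∀ (x : H₀) (h : H₁),
      R ((WithLp.equiv 2 (H₀ × H₁)).symm (x, h))
        = (WithLp.equiv 2 (H₀ × H₁)).symm (T₀ x + A h, T₁ h))
    (μ : ℂ) (k : H₁) (hk : T₁ k = μ • k)
    (e : H₀) (he : ContinuousLinearMap.adjoint T₀ e = (starRingEnd ℂ) μ • e)
    (p : Polynomial ℂ) (hpR : Polynomial.aeval R p = 0)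
    (hp' : (Polynomial.derivative p).eval μ ≠ 0) :
    (inner ℂ e (A k) : ℂ) = 0 := by
  set E := WithLp.equiv 2 (H₀ × H₁) with hE
  set v := E.symm (0, k) with hv
  have key : ∀ q : Polynomial ℂ,
      (inner ℂ e (E ((Polynomial.aeval R q) v)).1 : ℂ)
        = (Polynomial.derivative q).eval μ * inner ℂ e (A k)
      ∧ (E ((Polynomial.aeval R q) v)).2 = q.eval μ • k := by
    intro q
    induction q using Polynomial.induction_on with
    | C a =>
        simp [Polynomial.aeval_C, Algebra.algebraMap_eq_smul_one, hE,
          WithLp.ofLp_smul, hv, smul_zero]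
    | add q r hq hr =>
        obtain ⟨hq1, hq2⟩ := hq
        obtain ⟨hr1, hr2⟩ := hr
        constructor
        · simp only [map_add, ContinuousLinearMap.add_apply, hE, (show ∀ x y : WithLp 2 (H₀ × H₁), WithLp.equiv 2 (H₀ × H₁) (x + y) = WithLp.equiv 2 (H₀ × H₁) x + WithLp.equiv 2 (H₀ × H₁) y from fun _ _ => rfl),
            Prod.fst_add, inner_add_right]
          rw [← hE, hq1, hr1]
          simp [add_mul]
        · simp only [map_add, ContinuousLinearMap.add_apply, hE, (show ∀ x y : WithLp 2 (H₀ × H₁), WithLp.equiv 2 (H₀ × H₁) (x + y) = WithLp.equiv 2 (H₀ × H₁) x + WithLp.equiv 2 (H₀ × H₁) y from fun _ _ => rfl),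
            Prod.snd_add]
          rw [← hE, hq2, hr2]
          simp [add_smul]
    | monomial n a hq =>
        obtain ⟨hq1, hq2⟩ := hq
        set q := Polynomial.C a * Polynomial.X ^ n with hqdef
        have hrw : Polynomial.C a * Polynomial.X ^ (n + 1)
            = Polynomial.X * q := by ring
        have happ : (Polynomial.aeval R (Polynomial.X * q)) v
            = R ((Polynomial.aeval R q) v) := by
          rw [map_mul, ContinuousLinearMap.mul_apply, Polynomial.aeval_X]
        have hu : (Polynomial.aeval R q) v
            = E.symm ((E ((Polynomial.aeval R q) v)).1, q.eval μ • k) := by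
          rw [← hq2]
          exact (E.symm_apply_apply _).symm
        have hRu : R ((Polynomial.aeval R q) v)
            = E.symm (T₀ (E ((Polynomial.aeval R q) v)).1 + A (q.eval μ • k),
                T₁ (q.eval μ • k)) := by
          conv_lhs => rw [hu]
          exact hR _ _
        have hT₀ : (inner ℂ e (T₀ (E ((Polynomial.aeval R q) v)).1) : ℂ)
            = μ * inner ℂ e (E ((Polynomial.aeval R q) v)).1 := by
          rw [← ContinuousLinearMap.adjoint_inner_left, he, inner_smul_left]
          simp
        constructor
        · rw [hrw, happ, hRu]
          simp only [Equiv.apply_symm_apply]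
          rw [inner_add_right, hT₀, hq1, map_smul, inner_smul_right]
          simp only [Polynomial.derivative_mul, Polynomial.derivative_X,
            Polynomial.derivative_C, Polynomial.eval_add, Polynomial.eval_mul,
            Polynomial.eval_X, Polynomial.eval_pow, Polynomial.eval_C,
            Polynomial.eval_one, zero_mul, one_mul, Polynomial.eval_zero]
          ring
        · rw [hrw, happ, hRu]
          simp only [Equiv.apply_symm_apply]
          rw [map_smul, hk]
          simp only [Polynomial.eval_mul, Polynomial.eval_X, Polynomial.eval_pow,
            Polynomial.eval_C, smul_smul]
          congr 1
          ring
  have h := (key p).1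
  rw [hpR] at h
  simp only [ContinuousLinearMap.zero_apply, hE, WithLp.equiv_apply, WithLp.ofLp_zero,
    Prod.fst_zero, inner_zero_right] at h
  exact (mul_eq_zero.mp h.symm).resolve_left hp'
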